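/- arXiv:2106.10387 — 3 statements merged into one kernel-verified Lean document; each statement's English description precedes it below -/
import Mathlib

section
/- Fix a real x > 0 and c > 0, and for each h > 0 let K_h be a random variable with the beta-negative-binomial distribution BNB(x, cπ(h), c(1−π(h))). Then for every integer k ≥ 1, P(K_h = k) = c·[Γ(x+k)/(Γ(x)·k!)]·[Γ(k)·Γ(x+c)/Γ(x+k+c)]·r(t)·h + o(h) as h → 0+. -/
open scoped BigOperators
open Filter Topology Asymptotics

/-- The Beta function `B(a,b) = Γ(a)Γ(b)/Γ(a+b)`. -/
noncomputable def betaFn (a b : ℝ) : ℝ := Real.Gamma a * Real.Gamma b / Real.Gamma (a + b)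

/-- The pmf of the beta-negative-binomial distribution `BNB(x, α, β)`, obtained by
integrating the conditional pmf `P(K = k | Π) = [Γ(x+k)/(Γ(x)k!)]·Π^k(1−Π)^x` against
`Π ~ Beta(α,β)`: `P(K = k) = [Γ(x+k)/(Γ(x)k!)]·B(k+α, x+β)/B(α,β)`. -/
noncomputable def bnbPmf (x α β : ℝ) (k : ℕ) : ℝ :=
  Real.Gamma (x + (k : ℝ)) / (Real.Gamma x * (k.factorial : ℝ)) *
    (betaFn ((k : ℝ) + α) (x + β) / betaFn α β)

/-- `π(h) = 1 − exp(−∫_t^{t+h} r(s) ds)`. -/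
noncomputable def pih (r : ℝ → ℝ) (t h : ℝ) : ℝ :=
  1 - Real.exp (-(∫ s in t..(t + h), r s))

lemma contGammaAt {s : ℝ} (hs : 0 < s) : ContinuousAt Real.Gamma s :=
  (Real.differentiableAt_Gamma fun m =>
    (((neg_nonpos.mpr (Nat.cast_nonneg m)).trans_lt hs).ne')).continuousAt

lemma bnb_eq (c x : ℝ) (hc : 0 < c) (hx : 0 < x) (k : ℕ) (hk : 1 ≤ k)
    (p : ℝ) (hp0 : 0 < p) (hp1 : p < 1) :
    bnbPmf x (c * p) (c * (1 - p)) k =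
      (c * (Real.Gamma (x + (k : ℝ)) / (Real.Gamma x * (k.factorial : ℝ))) *
        (Real.Gamma c / Real.Gamma (x + (k : ℝ) + c))) * p *
        (Real.Gamma ((k : ℝ) + c * p) / Real.Gamma (c * p + 1) *
          (Real.Gamma (x + c * (1 - p)) / Real.Gamma (c * (1 - p)))) := by
  have h1p : 0 < 1 - p := by linarith
  unfold bnbPmf betaFn
  have e1 : (k : ℝ) + c * p + (x + c * (1 - p)) = x + (k : ℝ) + c := by ring
  have e2 : c * p + c * (1 - p) = c := by ring
  rw [e1, e2]
  have hcp : (0:ℝ) < c * p := mul_pos hc hp0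
  have hgcp : Real.Gamma (c * p) = Real.Gamma (c * p + 1) / (c * p) := by
    rw [Real.Gamma_add_one hcp.ne']; field_simp
  rw [hgcp]
  have hkpos : (0:ℝ) < (k : ℝ) := by exact_mod_cast hk
  have h1 : Real.Gamma (c * p + 1) ≠ 0 := (Real.Gamma_pos_of_pos (by linarith)).ne'
  have h2 : Real.Gamma (c * (1 - p)) ≠ 0 := (Real.Gamma_pos_of_pos (mul_pos hc h1p)).ne'
  have h3 : Real.Gamma (x + (k : ℝ) + c) ≠ 0 := (Real.Gamma_pos_of_pos (by linarith)).ne'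
  have h4 : Real.Gamma c ≠ 0 := (Real.Gamma_pos_of_pos hc).ne'
  have h5 : Real.Gamma x ≠ 0 := (Real.Gamma_pos_of_pos hx).ne'
  have h6 : (k.factorial : ℝ) ≠ 0 := Nat.cast_ne_zero.mpr k.factorial_ne_zero
  field_simp

lemma pih_hasDerivAt (r : ℝ → ℝ) (hr_cont : Continuous r) (t : ℝ) :
    HasDerivAt (pih r t) (r t) 0 := by
  have hFd : HasDerivAt (fun u => ∫ s in t..u, r s) (r t) (t + 0) := by
    simpa using (hr_cont.integral_hasStrictDerivAt t t).hasDerivAt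
  have inner : HasDerivAt (fun h : ℝ => t + h) 1 0 := (hasDerivAt_id 0).const_add t
  have hpi := ((hFd.comp 0 inner).neg.exp).const_sub 1
  have heq : (fun x => 1 - Real.exp ((-(fun u => ∫ s in t..u, r s) ∘ HAdd.hAdd t) x))
      = pih r t := by
    funext h; simp [pih, Function.comp]
  rw [heq] at hpi
  refine hpi.congr_deriv ?_
  simp [Function.comp_apply, Pi.neg_apply, intervalIntegral.integral_same]

lemma pih_mem (r : ℝ → ℝ) (hr_cont : Continuous r) (hr_pos : ∀ s, 0 < r s)
    (t h : ℝ) (hh : 0 < h) : 0 < pih r t h ∧ pih r t h < 1 := by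
  constructor
  · have hI : 0 < ∫ s in t..(t + h), r s :=
      intervalIntegral.intervalIntegral_pos_of_pos
        (hr_cont.intervalIntegrable t (t + h)) hr_pos (by linarith)
    have : Real.exp (-(∫ s in t..(t + h), r s)) < 1 := by
      rw [Real.exp_lt_one_iff]; linarith
    unfold pih; linarith
  · unfold pih
    have := Real.exp_pos (-(∫ s in t..(t + h), r s))
    linarith

/-- for `x > 0`, `c > 0`, `K_h ~ BNB(x, cπ(h), c(1−π(h)))` and every
integer `k ≥ 1`,
`P(K_h = k) = c·[Γ(x+k)/(Γ(x)k!)]·[Γ(k)Γ(x+c)/Γ(x+k+c)]·r(t)·h + o(h)` as `h → 0+`. -/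
theorem bnb_transition_rate
    (r : ℝ → ℝ) (hr_cont : Continuous r) (hr_pos : ∀ s, 0 < r s)
    (t c : ℝ) (hc : 0 < c) (x : ℝ) (hx : 0 < x) (k : ℕ) (hk : 1 ≤ k) :
    (fun h : ℝ => bnbPmf x (c * pih r t h) (c * (1 - pih r t h)) k
        - c * (Real.Gamma (x + (k : ℝ)) / (Real.Gamma x * (k.factorial : ℝ))) *
            (Real.Gamma (k : ℝ) * Real.Gamma (x + c) / Real.Gamma (x + (k : ℝ) + c))
            * r t * h)
      =o[𝓝[>] (0 : ℝ)] (fun h => h) := by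
  have hkpos : (0:ℝ) < (k : ℝ) := by exact_mod_cast hk
  set G : ℝ → ℝ := fun p => Real.Gamma ((k : ℝ) + c * p) / Real.Gamma (c * p + 1) *
      (Real.Gamma (x + c * (1 - p)) / Real.Gamma (c * (1 - p))) with hGdef
  set A : ℝ := c * (Real.Gamma (x + (k : ℝ)) / (Real.Gamma x * (k.factorial : ℝ))) *
      (Real.Gamma c / Real.Gamma (x + (k : ℝ) + c)) with hAdef
  have hpi0 : pih r t 0 = 0 := by simp [pih]
  have hderiv := pih_hasDerivAt r hr_cont t
  -- π(h) − r t · h = o(h) on 𝓝[>] 0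
  have h1 : (fun h => pih r t h - r t * h) =o[𝓝[>] (0:ℝ)] (fun h => h) := by
    have := (hasDerivAt_iff_isLittleO.mp hderiv).mono
      (nhdsWithin_le_nhds : 𝓝[>] (0:ℝ) ≤ 𝓝 0)
    simpa [hpi0, smul_eq_mul, mul_comm] using this
  -- π(h) = O(h)
  have hπO : (fun h => pih r t h) =O[𝓝[>] (0:ℝ)] (fun h => h) := by
    have h2 : (fun h : ℝ => r t * h) =O[𝓝[>] (0:ℝ)] (fun h => h) :=
      (isBigO_refl (fun h : ℝ => h) _).const_mul_left (r t)
    simpa using h1.isBigO.add h2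
  -- π → 0 within 𝓝[>] 0
  have hπtendsto : Tendsto (pih r t) (𝓝[>] (0:ℝ)) (𝓝 0) := by
    have := hderiv.continuousAt.tendsto
    rw [hpi0] at this
    exact this.mono_left nhdsWithin_le_nhds
  -- G continuous at 0
  have hGcont : ContinuousAt G 0 := by
    have i1 : ContinuousAt (fun p : ℝ => (k : ℝ) + c * p) 0 := by fun_prop
    have i2 : ContinuousAt (fun p : ℝ => c * p + 1) 0 := by fun_prop
    have i3 : ContinuousAt (fun p : ℝ => x + c * (1 - p)) 0 := by fun_prop
    have i4 : ContinuousAt (fun p : ℝ => c * (1 - p)) 0 := by fun_prop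
    have c1 : ContinuousAt (Real.Gamma ∘ fun p : ℝ => (k : ℝ) + c * p) 0 :=
      ContinuousAt.comp (x := (0:ℝ)) (g := Real.Gamma)
        (contGammaAt (show (0:ℝ) < (k : ℝ) + c * 0 by simpa using hkpos)) i1
    have c2 : ContinuousAt (Real.Gamma ∘ fun p : ℝ => c * p + 1) 0 :=
      ContinuousAt.comp (x := (0:ℝ)) (g := Real.Gamma)
        (contGammaAt (show (0:ℝ) < c * 0 + 1 by norm_num)) i2
    have c3 : ContinuousAt (Real.Gamma ∘ fun p : ℝ => x + c * (1 - p)) 0 :=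
      ContinuousAt.comp (x := (0:ℝ)) (g := Real.Gamma)
        (contGammaAt (show (0:ℝ) < x + c * (1 - 0) by nlinarith)) i3
    have c4 : ContinuousAt (Real.Gamma ∘ fun p : ℝ => c * (1 - p)) 0 :=
      ContinuousAt.comp (x := (0:ℝ)) (g := Real.Gamma)
        (contGammaAt (show (0:ℝ) < c * (1 - 0) by nlinarith)) i4
    have n2 : Real.Gamma (c * 0 + 1) ≠ 0 := (Real.Gamma_pos_of_pos (by norm_num)).ne'
    have n4 : Real.Gamma (c * (1 - 0)) ≠ 0 := (Real.Gamma_pos_of_pos (by nlinarith)).ne'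
    have c2' : ContinuousAt (fun p : ℝ => Real.Gamma (c * p + 1)) 0 := c2
    have c4' : ContinuousAt (fun p : ℝ => Real.Gamma (c * (1 - p))) 0 := c4
    have c1' : ContinuousAt (fun p : ℝ => Real.Gamma ((k : ℝ) + c * p)) 0 := c1
    have c3' : ContinuousAt (fun p : ℝ => Real.Gamma (x + c * (1 - p))) 0 := c3
    exact (c1'.div c2' n2).mul (c3'.div c4' n4)
  -- G(π(h)) − G 0 = o(1)
  have hGo : (fun h => G (pih r t h) - G 0) =o[𝓝[>] (0:ℝ)] (fun _ => (1:ℝ)) := by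
    rw [isLittleO_one_iff]
    have : Tendsto (fun h => G (pih r t h)) (𝓝[>] (0:ℝ)) (𝓝 (G 0)) :=
      (hGcont.tendsto).comp hπtendsto
    simpa using this.sub_const (G 0)
  have hmul : (fun h => pih r t h * (G (pih r t h) - G 0)) =o[𝓝[>] (0:ℝ)] (fun h => h) := by
    simpa using hπO.mul_isLittleO hGo
  have hbig : (fun h => A * (pih r t h * (G (pih r t h) - G 0)
      + G 0 * (pih r t h - r t * h))) =o[𝓝[>] (0:ℝ)] (fun h => h) :=
    (hmul.add (h1.const_mul_left (G 0))).const_mul_left A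
  refine hbig.congr' ?_ (by rfl)
  filter_upwards [self_mem_nhdsWithin] with h hh
  have hh' : (0:ℝ) < h := hh
  obtain ⟨hp0, hp1⟩ := pih_mem r hr_cont hr_pos t h hh'
  simp only [hGdef, hAdef]
  rw [bnb_eq c x hc hx k hk (pih r t h) hp0 hp1]
  have n1 : Real.Gamma x ≠ 0 := (Real.Gamma_pos_of_pos hx).ne'
  have n2 : (k.factorial : ℝ) ≠ 0 := Nat.cast_ne_zero.mpr k.factorial_ne_zero
  have n3 : Real.Gamma (x + (k : ℝ) + c) ≠ 0 := (Real.Gamma_pos_of_pos (by linarith)).ne'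
  have n4 : Real.Gamma c ≠ 0 := (Real.Gamma_pos_of_pos hc).ne'
  have n5 : Real.Gamma (c * pih r t h + 1) ≠ 0 :=
    (Real.Gamma_pos_of_pos (by nlinarith)).ne'
  have n6 : Real.Gamma (c * (1 - pih r t h)) ≠ 0 :=
    (Real.Gamma_pos_of_pos (by nlinarith)).ne'
  norm_num [Real.Gamma_one]
  field_simp
  ring
end

section
/- Fix a real x > 0 and c > 0, and for each h > 0 let (Δ_1^h,…,Δ_m^h) be a random vector with the Dirichlet–negative-multinomial distribution DNM(x; cπ_0(h), cπ_1(h),…,cπ_m(h)). Let (k_1,…,k_m) be fixed nonnegative integers and set S̄ = {i ∈ {1,…,m} : k_i ≥ 1}. If |S̄| ≥ 2, then P((Δ_1^h,…,Δ_m^h) = (k_1,…,k_m)) = o(h) as h → 0+. If S̄ = {i} for a single index i with k_i = k ≥ 1, then P((Δ_1^h,…,Δ_m^h) = (k_1,…,k_m)) = c·[Γ(x+k)/(Γ(x)·k!)]·[Γ(x+c)·Γ(k)/Γ(x+k+c)]·r_i(t)·h + o(h) as h → 0+. -/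
open scoped BigOperators
open Filter Topology Asymptotics

/-- The pmf of the Dirichlet–negative-multinomial distribution `DNM(x; α_0, α_1,…,α_m)`
on `ℕ^m`, obtained by compounding the negative-multinomial pmf
`[Γ(x+∑k)/(Γ(x)∏k_i!)]·Π_0^x·∏Π_i^{k_i}` with `(Π_0,…,Π_m) ~ Dir(α_0,…,α_m)`:
`P(k) = [Γ(x+∑k)/(Γ(x)∏k_i!)]·[Γ(c)/(Γ(α_0)∏Γ(α_i))]·[Γ(x+α_0)∏Γ(k_i+α_i)]/Γ(x+∑k+c)`
with `c = α_0 + ∑ α_i`. -/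
noncomputable def dnmPmf (m : ℕ) (x α0 : ℝ) (α : Fin m → ℝ) (k : Fin m → ℕ) : ℝ :=
  Real.Gamma (x + ∑ i, (k i : ℝ)) / (Real.Gamma x * ∏ i, ((k i).factorial : ℝ)) *
    (Real.Gamma (α0 + ∑ i, α i) / (Real.Gamma α0 * ∏ i, Real.Gamma (α i))) *
    ((Real.Gamma (x + α0) * ∏ i, Real.Gamma ((k i : ℝ) + α i)) /
      Real.Gamma (x + (∑ i, (k i : ℝ)) + (α0 + ∑ i, α i)))

/-- Expectation of `f(Δ_1,…,Δ_m)` under `DNM(x; α_0, α)`. -/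
noncomputable def dnmExp (m : ℕ) (x α0 : ℝ) (α : Fin m → ℝ) (f : (Fin m → ℕ) → ℝ) : ℝ :=
  ∑' k : Fin m → ℕ, f k * dnmPmf m x α0 α k

/-- `π_i(h) = (1 − exp(−∑_j ∫_t^{t+h} r_j(s) ds)) · r_i(t)/∑_j r_j(t)`, for `i = 1,…,m`. -/
noncomputable def pmain (m : ℕ) (r : Fin m → ℝ → ℝ) (t h : ℝ) (i : Fin m) : ℝ :=
  (1 - Real.exp (-(∑ j, ∫ s in t..(t + h), r j s))) * r i t / ∑ j, r j t

/-- `π_0(h) = 1 − ∑_{i=1}^m π_i(h)`. -/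
noncomputable def pzero (m : ℕ) (r : Fin m → ℝ → ℝ) (t h : ℝ) : ℝ :=
  1 - ∑ i, pmain m r t h i

/-- Ascending-factorial polynomial `a(a+1)⋯(a+k−1)`. -/
noncomputable def Pfun (k : ℕ) (a : ℝ) : ℝ := ∏ j ∈ Finset.range k, (a + (j : ℝ))

/-- `Qfun n b = (b+1)(b+2)⋯(b+n)`. -/
noncomputable def Qfun (n : ℕ) (b : ℝ) : ℝ := ∏ j ∈ Finset.range n, (b + (j : ℝ) + 1)

private lemma Pfun_succ (n : ℕ) (b : ℝ) : Pfun (n + 1) b = Qfun n b * b := by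
  rw [Pfun, Qfun, Finset.prod_range_succ']
  push_cast
  rw [add_zero]
  congr 1
  exact Finset.prod_congr rfl fun j _ => by ring

private lemma Qfun_zero (n : ℕ) : Qfun n 0 = (n.factorial : ℝ) := by
  rw [Qfun, ← Finset.prod_range_add_one_eq_factorial n]
  push_cast
  exact Finset.prod_congr rfl fun j _ => by ring

private lemma Pfun_zero_of_pos {n : ℕ} (hn : 1 ≤ n) : Pfun n 0 = 0 :=
  Finset.prod_eq_zero (Finset.mem_range.mpr hn) (by simp)

private lemma Pfun_continuous (n : ℕ) : Continuous (Pfun n) := by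
  unfold Pfun
  exact continuous_finset_prod _ fun j _ => by continuity

private lemma Qfun_continuous (n : ℕ) : Continuous (Qfun n) := by
  unfold Qfun
  exact continuous_finset_prod _ fun j _ => by continuity

private lemma gamma_nat_add {a : ℝ} (ha : 0 < a) (n : ℕ) :
    Real.Gamma ((n : ℝ) + a) = Real.Gamma a * Pfun n a := by
  induction n with
  | zero => simp [Pfun]
  | succ n ih =>
    have hna : (n : ℝ) + a ≠ 0 := by positivity
    have hcast : ((n + 1 : ℕ) : ℝ) + a = ((n : ℝ) + a) + 1 := by push_cast; ring
    rw [hcast, Real.Gamma_add_one hna, ih]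
    have hstep : Pfun (n + 1) a = Pfun n a * (a + n) := by
      rw [Pfun, Pfun, Finset.prod_range_succ]
    rw [hstep]
    ring

private lemma gamma_continuousAt {y : ℝ} (hy : 0 < y) : ContinuousAt Real.Gamma y :=
  (Real.differentiableAt_Gamma fun n =>
    (lt_of_le_of_lt (neg_nonpos.mpr (Nat.cast_nonneg n)) hy).ne').continuousAt

private lemma littleo_of_tendsto_div {f : ℝ → ℝ} {T : ℝ}
    (hf : Tendsto (fun h => f h / h) (𝓝[>] (0:ℝ)) (𝓝 T)) :
    (fun h => f h - T * h) =o[𝓝[>] (0:ℝ)] fun h => h := by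
  have hne : ∀ᶠ h in 𝓝[>] (0:ℝ), h ≠ 0 := by
    filter_upwards [self_mem_nhdsWithin] with h hh
    exact ne_of_gt hh
  refine (isLittleO_iff_tendsto' ?_).mpr ?_
  · filter_upwards [hne] with h h0 h1
    exact absurd h1 h0
  · have h2 : Tendsto (fun h => f h / h - T) (𝓝[>] (0:ℝ)) (𝓝 0) := by
      simpa using hf.sub (tendsto_const_nhds (x := T))
    refine h2.congr' ?_
    filter_upwards [hne] with h h0
    rw [sub_div, mul_div_assoc, div_self h0, mul_one]

/-- for `x > 0`, `c > 0`, and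
`(Δ_1^h,…,Δ_m^h) ~ DNM(x; cπ_0(h), cπ_1(h),…,cπ_m(h))`, fix `(k_1,…,k_m)` and let
`S̄ = {i : k_i ≥ 1}`.  If `|S̄| ≥ 2` then `P(Δ^h = k) = o(h)`; if `S̄ = {i}` with
`k_i = k ≥ 1` then
`P(Δ^h = k) = c·[Γ(x+k)/(Γ(x)k!)]·[Γ(x+c)Γ(k)/Γ(x+k+c)]·r_i(t)·h + o(h)`
as `h → 0+`. -/
theorem dnm_transition_rates
    (m : ℕ) (hm : 1 ≤ m) (r : Fin m → ℝ → ℝ)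
    (hr_cont : ∀ i, Continuous (r i)) (hr_pos : ∀ i s, 0 < r i s)
    (t c : ℝ) (hc : 0 < c) (x : ℝ) (hx : 0 < x) (k : Fin m → ℕ) :
    (2 ≤ (Finset.univ.filter fun i : Fin m => 1 ≤ k i).card →
      (fun h : ℝ => dnmPmf m x (c * pzero m r t h) (fun i' => c * pmain m r t h i') k)
        =o[𝓝[>] (0 : ℝ)] (fun h => h)) ∧
    (∀ i : Fin m, (Finset.univ.filter fun i' : Fin m => 1 ≤ k i') = {i} →
      (fun h : ℝ =>
          dnmPmf m x (c * pzero m r t h) (fun i' => c * pmain m r t h i') k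
            - c * (Real.Gamma (x + (k i : ℝ))
                  / (Real.Gamma x * ((k i).factorial : ℝ))) *
                (Real.Gamma (x + c) * Real.Gamma (k i : ℝ)
                  / Real.Gamma (x + (k i : ℝ) + c)) * r i t * h)
        =o[𝓝[>] (0 : ℝ)] (fun h => h)) := by
  haveI : Nonempty (Fin m) := ⟨⟨0, hm⟩⟩
  have hR : (0:ℝ) < ∑ j, r j t :=
    Finset.sum_pos (fun j _ => hr_pos j t) Finset.univ_nonempty
  -- derivative of the cumulative hazard at 0
  have hIderiv : HasDerivAt (fun h : ℝ => ∑ j, ∫ s in t..(t + h), r j s) (∑ j, r j t) 0 := by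
    apply HasDerivAt.fun_sum
    intro j _
    have h1 : HasDerivAt (fun u : ℝ => ∫ s in t..u, r j s) (r j (t + 0)) (t + 0) := by
      rw [add_zero]
      exact intervalIntegral.integral_hasDerivAt_right
        ((hr_cont j).intervalIntegrable t t)
        ((hr_cont j).stronglyMeasurable.stronglyMeasurableAtFilter)
        (hr_cont j).continuousAt
    have h2 : HasDerivAt (fun h : ℝ => t + h) 1 0 := by
      simpa using (hasDerivAt_id (0:ℝ)).const_add t
    have h3 := h1.comp 0 h2
    simpa [Function.comp_def] using h3
  -- derivative of the jump probabilities at 0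
  have hαderiv : ∀ i, HasDerivAt (fun h => c * pmain m r t h i) (c * r i t) 0 := by
    intro i
    have he : HasDerivAt (fun h : ℝ => Real.exp (-(∑ j, ∫ s in t..(t + h), r j s)))
        (-(∑ j, r j t)) 0 := by
      have h1 := (Real.hasDerivAt_exp (-(∑ j, ∫ s in t..(t + 0), r j s))).comp 0 hIderiv.neg
      have hI0 : (∑ j, ∫ s in t..(t + 0), r j s) = 0 := by simp
      rw [hI0] at h1
      simpa [Function.comp_def, Pi.neg_def] using h1
    have h2 : HasDerivAt
        (fun h : ℝ => (1 - Real.exp (-(∑ j, ∫ s in t..(t + h), r j s)))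
          * (c * r i t / ∑ j, r j t))
        ((∑ j, r j t) * (c * r i t / ∑ j, r j t)) 0 := by
      simpa [mul_comm] using ((he.const_sub 1).mul_const (c * r i t / ∑ j, r j t))
    have h3 : (∑ j, r j t) * (c * r i t / ∑ j, r j t) = c * r i t := by
      field_simp
    rw [h3] at h2
    refine h2.congr_of_eventuallyEq ?_
    exact Eventually.of_forall fun h => by simp only [pmain]; ring
  have hpm0 : ∀ i, c * pmain m r t 0 i = 0 := by
    intro i
    simp [pmain]
  have hslope : ∀ i, Tendsto (fun h => c * pmain m r t h i / h) (𝓝[>] (0:ℝ))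
      (𝓝 (c * r i t)) := by
    intro i
    have h1 := hasDerivAt_iff_tendsto_slope.mp (hαderiv i)
    have h2 := h1.mono_left
      (nhdsWithin_mono 0 fun y hy => Set.mem_compl_singleton_iff.mpr (ne_of_gt hy))
    refine h2.congr fun h => ?_
    rw [slope_def_field, hpm0 i, sub_zero, sub_zero]
  have htend0 : ∀ i, Tendsto (fun h => c * pmain m r t h i) (𝓝[>] (0:ℝ)) (𝓝 0) := by
    intro i
    have h1 := (hαderiv i).continuousAt.tendsto
    rw [hpm0 i] at h1
    exact h1.mono_left nhdsWithin_le_nhds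
  have hα0eq : ∀ h, c * pzero m r t h = c - ∑ i, c * pmain m r t h i := by
    intro h
    simp [pzero, Finset.mul_sum, mul_sub]
  have hα0t : Tendsto (fun h => c * pzero m r t h) (𝓝[>] (0:ℝ)) (𝓝 c) := by
    have h1 : Tendsto (fun h => c - ∑ i, c * pmain m r t h i) (𝓝[>] (0:ℝ))
        (𝓝 (c - ∑ i : Fin m, (0:ℝ))) :=
      tendsto_const_nhds.sub (tendsto_finset_sum _ fun i _ => htend0 i)
    simp only [Finset.sum_const_zero, sub_zero] at h1
    exact h1.congr fun h => (hα0eq h).symm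
  have hαpos : ∀ h : ℝ, 0 < h → ∀ i, 0 < c * pmain m r t h i := by
    intro h hh i
    have hIpos : 0 < ∑ j, ∫ s in t..(t + h), r j s :=
      Finset.sum_pos (fun j _ => intervalIntegral.intervalIntegral_pos_of_pos
        ((hr_cont j).intervalIntegrable t (t + h)) (hr_pos j) (by linarith))
        Finset.univ_nonempty
    have he : Real.exp (-(∑ j, ∫ s in t..(t + h), r j s)) < 1 := by
      rw [← Real.exp_zero]
      exact Real.exp_lt_exp.mpr (by linarith)
    simp only [pmain]
    apply mul_pos hc
    exact div_pos (mul_pos (by linarith) (hr_pos i t)) hR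
  set S : ℝ := ∑ i, (k i : ℝ) with hS_def
  have hS0 : 0 ≤ S := Finset.sum_nonneg fun i _ => Nat.cast_nonneg _
  set A : ℝ := Real.Gamma (x + S) / (Real.Gamma x * ∏ i, ((k i).factorial : ℝ))
    with hA_def
  have hD : (0:ℝ) < Real.Gamma (x + S + c) := Real.Gamma_pos_of_pos (by linarith)
  have hΓc : Real.Gamma c ≠ 0 := (Real.Gamma_pos_of_pos hc).ne'
  -- the master limit computation
  have key : ∀ i1 : Fin m, ∀ n1 : ℕ, k i1 = n1 + 1 →
      Tendsto (fun h =>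
          dnmPmf m x (c * pzero m r t h) (fun i' => c * pmain m r t h i') k / h)
        (𝓝[>] (0:ℝ))
        (𝓝 (A * (Real.Gamma c * Real.Gamma (x + c)
            / (Real.Gamma c * Real.Gamma (x + S + c)))
          * ((c * r i1 t) * Qfun n1 0)
          * ∏ i ∈ Finset.univ.erase i1, Pfun (k i) 0)) := by
    intro i1 n1 hn1
    have hev : ∀ᶠ h in 𝓝[>] (0:ℝ),
        dnmPmf m x (c * pzero m r t h) (fun i' => c * pmain m r t h i') k / h
          = A * (Real.Gamma c * Real.Gamma (x + c * pzero m r t h)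
              / (Real.Gamma (c * pzero m r t h) * Real.Gamma (x + S + c)))
            * ((c * pmain m r t h i1 / h) * Qfun n1 (c * pmain m r t h i1))
            * ∏ i ∈ Finset.univ.erase i1, Pfun (k i) (c * pmain m r t h i) := by
      have hevp : ∀ᶠ h in 𝓝[>] (0:ℝ), 0 < c * pzero m r t h :=
        hα0t.eventually (eventually_gt_nhds hc)
      filter_upwards [hevp, self_mem_nhdsWithin] with h h0pos hmem
      have hh : (0:ℝ) < h := hmem
      have htot : c * pzero m r t h + ∑ i, c * pmain m r t h i = c := by
        simp [pzero, Finset.mul_sum, mul_sub]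
      have hprod : (∏ i, Real.Gamma ((k i : ℝ) + c * pmain m r t h i))
          = (∏ i, Real.Gamma (c * pmain m r t h i))
            * ∏ i, Pfun (k i) (c * pmain m r t h i) := by
        rw [← Finset.prod_mul_distrib]
        exact Finset.prod_congr rfl fun i _ => gamma_nat_add (hαpos h hh i) (k i)
      have hΓprod : (∏ i, Real.Gamma (c * pmain m r t h i)) ≠ 0 :=
        Finset.prod_ne_zero_iff.mpr fun i _ =>
          (Real.Gamma_pos_of_pos (hαpos h hh i)).ne'
      have hΓ0 : Real.Gamma (c * pzero m r t h) ≠ 0 :=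
        (Real.Gamma_pos_of_pos h0pos).ne'
      have hPsplit : (∏ i, Pfun (k i) (c * pmain m r t h i))
          = Pfun (k i1) (c * pmain m r t h i1)
            * ∏ i ∈ Finset.univ.erase i1, Pfun (k i) (c * pmain m r t h i) :=
        (Finset.mul_prod_erase Finset.univ _ (Finset.mem_univ i1)).symm
      simp only [dnmPmf]
      rw [htot, ← hS_def, ← hA_def, hprod, hPsplit, hn1, Pfun_succ]
      field_simp
    refine Tendsto.congr' (hev.mono fun h hh => hh.symm) ?_
    have hG : Tendsto (fun h => Real.Gamma c * Real.Gamma (x + c * pzero m r t h)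
        / (Real.Gamma (c * pzero m r t h) * Real.Gamma (x + S + c))) (𝓝[>] (0:ℝ))
        (𝓝 (Real.Gamma c * Real.Gamma (x + c)
          / (Real.Gamma c * Real.Gamma (x + S + c)))) := by
      have hcont : ContinuousAt (fun y : ℝ => Real.Gamma c * Real.Gamma (x + y)
          / (Real.Gamma y * Real.Gamma (x + S + c))) c := by
        have h1 : ContinuousAt (fun y : ℝ => Real.Gamma (x + y)) c :=
          (gamma_continuousAt (by linarith)).comp (continuousAt_const.add continuousAt_id)
        exact (continuousAt_const.mul h1).div
          ((gamma_continuousAt hc).mul continuousAt_const)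
          (mul_ne_zero hΓc hD.ne')
      simpa [Function.comp_def] using hcont.tendsto.comp hα0t
    have hQ : Tendsto (fun h => Qfun n1 (c * pmain m r t h i1)) (𝓝[>] (0:ℝ))
        (𝓝 (Qfun n1 0)) := by
      simpa [Function.comp_def] using ((Qfun_continuous n1).tendsto 0).comp (htend0 i1)
    have hPE : Tendsto (fun h => ∏ i ∈ Finset.univ.erase i1,
        Pfun (k i) (c * pmain m r t h i)) (𝓝[>] (0:ℝ))
        (𝓝 (∏ i ∈ Finset.univ.erase i1, Pfun (k i) 0)) := by
      apply tendsto_finset_prod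
      intro i _
      simpa [Function.comp_def] using ((Pfun_continuous (k i)).tendsto 0).comp (htend0 i)
    exact ((tendsto_const_nhds.mul hG).mul ((hslope i1).mul hQ)).mul hPE
  constructor
  · -- at least two jumping coordinates: o(h)
    intro hcard
    have hcard' : 1 < (Finset.univ.filter fun i : Fin m => 1 ≤ k i).card := by omega
    obtain ⟨i1, hi1, i2, hi2, hne⟩ := Finset.one_lt_card.mp hcard'
    have hk1 : 1 ≤ k i1 := (Finset.mem_filter.mp hi1).2
    have hk2 : 1 ≤ k i2 := (Finset.mem_filter.mp hi2).2
    obtain ⟨n1, hn1⟩ : ∃ n1, k i1 = n1 + 1 := ⟨k i1 - 1, by omega⟩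
    have hkey := key i1 n1 hn1
    have hzero : (∏ i ∈ Finset.univ.erase i1, Pfun (k i) 0) = 0 :=
      Finset.prod_eq_zero (Finset.mem_erase.mpr ⟨hne.symm, Finset.mem_univ i2⟩)
        (Pfun_zero_of_pos hk2)
    rw [hzero, mul_zero] at hkey
    simpa using littleo_of_tendsto_div hkey
  · -- a single jumping coordinate
    intro i1 hfilt
    have hi1mem : i1 ∈ Finset.univ.filter fun i' : Fin m => 1 ≤ k i' := by
      rw [hfilt]; exact Finset.mem_singleton_self i1
    have hk1 : 1 ≤ k i1 := (Finset.mem_filter.mp hi1mem).2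
    have hk0 : ∀ i, i ≠ i1 → k i = 0 := by
      intro i hnei
      by_contra hpos
      have hmem : i ∈ Finset.univ.filter fun i' : Fin m => 1 ≤ k i' :=
        Finset.mem_filter.mpr ⟨Finset.mem_univ i, by omega⟩
      rw [hfilt, Finset.mem_singleton] at hmem
      exact hnei hmem
    obtain ⟨n1, hn1⟩ : ∃ n1, k i1 = n1 + 1 := ⟨k i1 - 1, by omega⟩
    have hkey := key i1 n1 hn1
    have hone : (∏ i ∈ Finset.univ.erase i1, Pfun (k i) 0) = 1 :=
      Finset.prod_eq_one fun i hi => by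
        rw [hk0 i (Finset.mem_erase.mp hi).1]
        simp [Pfun]
    rw [hone, mul_one] at hkey
    have hSeq : S = (k i1 : ℝ) := by
      rw [hS_def]
      refine Finset.sum_eq_single_of_mem i1 (Finset.mem_univ i1) fun b _ hb => ?_
      rw [hk0 b hb]
      simp
    have hprodfact : (∏ i, ((k i).factorial : ℝ)) = ((k i1).factorial : ℝ) := by
      refine Finset.prod_eq_single_of_mem i1 (Finset.mem_univ i1) fun b _ hb => ?_
      rw [hk0 b hb]
      simp
    have hgk : Real.Gamma ((k i1 : ℝ)) = (n1.factorial : ℝ) := by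
      rw [hn1]
      push_cast
      exact Real.Gamma_nat_eq_factorial n1
    have hL : A * (Real.Gamma c * Real.Gamma (x + c)
          / (Real.Gamma c * Real.Gamma (x + S + c)))
        * ((c * r i1 t) * Qfun n1 0)
        = c * (Real.Gamma (x + (k i1 : ℝ))
              / (Real.Gamma x * ((k i1).factorial : ℝ))) *
            (Real.Gamma (x + c) * Real.Gamma (k i1 : ℝ)
              / Real.Gamma (x + (k i1 : ℝ) + c)) * r i1 t := by
      rw [hA_def, hSeq, hprodfact, Qfun_zero, hgk, mul_div_mul_left _ _ hΓc]
      ring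
    rw [hL] at hkey
    exact littleo_of_tendsto_div hkey
end

section
/- Fix an integer m₂ ≥ 1, reals x_1,…,x_{m₂} > 0, and c > 0. For each h > 0 let Π_h be drawn from the Beta(cπ(h), c(1−π(h))) distribution and, conditionally on Π_h, let Δ_1^h,…,Δ_{m₂}^h be independent with P(Δ_i^h = k | Π_h) = [Γ(x_i+k)/(Γ(x_i)·k!)]·Π_h^k·(1−Π_h)^{x_i} for k ∈ ℕ. Then for all nonnegative integers k_1,…,k_{m₂} with Σ_{i=1}^{m₂} k_i ≥ 1, one has P(Δ_i^h = k_i for all i) = q·h + o(h) as h → 0+, where q = c·(∏_{i=1}^{m₂} Γ(x_i+k_i)/(Γ(x_i)·k_i!))·[Γ(Σ_i k_i)·Γ(Σ_i x_i + c)/Γ(Σ_i x_i + Σ_i k_i + c)]·r(t), which is strictly positive. -/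
open scoped BigOperators
open Filter Topology Asymptotics

/-- The joint pmf of `(Δ_1,…,Δ_m)` where, conditionally on `Π ~ Beta(α,β)`, the `Δ_i`
are independent with `P(Δ_i = k | Π) = [Γ(x_i+k)/(Γ(x_i)k!)]·Π^k(1−Π)^{x_i}`:
`P(Δ = k) = (∏ Γ(x_i+k_i)/(Γ(x_i)k_i!)) · B(∑k+α, ∑x+β)/B(α,β)`. -/
noncomputable def mbnbPmf (m : ℕ) (x : Fin m → ℝ) (α β : ℝ) (k : Fin m → ℕ) : ℝ :=
  (∏ i, Real.Gamma (x i + (k i : ℝ)) / (Real.Gamma (x i) * ((k i).factorial : ℝ))) *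
    (betaFn ((∑ i, (k i : ℝ)) + α) ((∑ i, x i) + β) / betaFn α β)

/-- Expectation of `f(Δ_1,…,Δ_m)` under the above joint distribution. -/
noncomputable def mbnbExp (m : ℕ) (x : Fin m → ℝ) (α β : ℝ) (f : (Fin m → ℕ) → ℝ) : ℝ :=
  ∑' k : Fin m → ℕ, f k * mbnbPmf m x α β k

/-- with `Π_h ~ Beta(cπ(h), c(1−π(h)))` and conditionally independent
negative binomials `Δ_i^h` (size parameters `x_i > 0`), for all `(k_1,…,k_{m₂})` with
`∑ k_i ≥ 1`: `P(Δ_i^h = k_i ∀ i) = q·h + o(h)` as `h → 0+`, where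
`q = c·(∏ Γ(x_i+k_i)/(Γ(x_i)k_i!))·[Γ(∑k)Γ(∑x+c)/Γ(∑x+∑k+c)]·r(t) > 0`. -/
theorem mbnb_transition_rate
    (r : ℝ → ℝ) (hr_cont : Continuous r) (hr_pos : ∀ s, 0 < r s)
    (t c : ℝ) (hc : 0 < c) (m₂ : ℕ) (hm : 1 ≤ m₂)
    (x : Fin m₂ → ℝ) (hx : ∀ i, 0 < x i)
    (k : Fin m₂ → ℕ) (hksum : 1 ≤ ∑ i, k i) :
    (fun h : ℝ => mbnbPmf m₂ x (c * pih r t h) (c * (1 - pih r t h)) k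
        - c * (∏ i, Real.Gamma (x i + (k i : ℝ))
              / (Real.Gamma (x i) * ((k i).factorial : ℝ))) *
            (Real.Gamma (∑ i, (k i : ℝ)) * Real.Gamma ((∑ i, x i) + c)
              / Real.Gamma ((∑ i, x i) + (∑ i, (k i : ℝ)) + c)) * r t * h)
      =o[𝓝[>] (0 : ℝ)] (fun h => h) ∧
    0 < c * (∏ i, Real.Gamma (x i + (k i : ℝ))
            / (Real.Gamma (x i) * ((k i).factorial : ℝ))) *
          (Real.Gamma (∑ i, (k i : ℝ)) * Real.Gamma ((∑ i, x i) + c)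
            / Real.Gamma ((∑ i, x i) + (∑ i, (k i : ℝ)) + c)) * r t := by
  have hne : Nonempty (Fin m₂) := ⟨⟨0, hm⟩⟩
  set K : ℝ := ∑ i, (k i : ℝ) with hKdef
  set X : ℝ := ∑ i, x i with hXdef
  set P : ℝ := ∏ i, Real.Gamma (x i + (k i : ℝ)) / (Real.Gamma (x i) * ((k i).factorial : ℝ))
    with hPdef
  have hXpos : 0 < X := Finset.sum_pos (fun i _ => hx i) Finset.univ_nonempty
  have hKpos : 0 < K := by
    have h1 : (1 : ℝ) ≤ K := by
      rw [hKdef, ← Nat.cast_sum]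
      exact_mod_cast hksum
    linarith
  have hPpos : 0 < P := Finset.prod_pos fun i _ =>
    div_pos (Real.Gamma_pos_of_pos (by have := hx i; positivity))
      (mul_pos (Real.Gamma_pos_of_pos (hx i)) (by exact_mod_cast (k i).factorial_pos))
  set L : ℝ := Real.Gamma K * Real.Gamma (X + c) / Real.Gamma (X + K + c) with hLdef
  have hLpos : 0 < L := div_pos
    (mul_pos (Real.Gamma_pos_of_pos hKpos) (Real.Gamma_pos_of_pos (by linarith)))
    (Real.Gamma_pos_of_pos (by linarith))
  refine ⟨?_, mul_pos (mul_pos (mul_pos hc hPpos) hLpos) (hr_pos t)⟩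
  -- derivative of pih at 0
  have hInt : ∀ a b : ℝ, IntervalIntegrable r MeasureTheory.volume a b := fun a b =>
    hr_cont.intervalIntegrable a b
  have hFd : HasDerivAt (fun h : ℝ => ∫ s in t..(t + h), r s) (r t) 0 := by
    have h1 : HasDerivAt (fun u : ℝ => ∫ s in t..u, r s) (r t) (t + 0) := by
      simpa using intervalIntegral.integral_hasDerivAt_right (hInt t t)
        (hr_cont.stronglyMeasurableAtFilter _ _) hr_cont.continuousAt
    have h2 : HasDerivAt (fun h : ℝ => t + h) 1 0 := (hasDerivAt_id (0 : ℝ)).const_add t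
    simpa [Function.comp_def] using h1.comp 0 h2
  have hπd : HasDerivAt (pih r t) (r t) 0 := by
    have h3 := (hFd.neg.exp).const_sub 1
    have h4 : HasDerivAt (fun x => 1 - Real.exp (-∫ (s : ℝ) in t..t + x, r s)) (r t) 0 := by
      simpa [intervalIntegral.integral_same] using h3
    exact h4
  have hπ0 : pih r t 0 = 0 := by simp [pih]
  have hlin : (fun h : ℝ => pih r t h - h * r t) =o[𝓝[>] (0 : ℝ)] fun h => h := by
    have h5 := hasDerivAt_iff_isLittleO.mp hπd
    simp only [hπ0, sub_zero, smul_eq_mul] at h5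
    exact h5.mono nhdsWithin_le_nhds
  have hπtend : Tendsto (pih r t) (𝓝[>] (0 : ℝ)) (𝓝 0) := by
    have h6 := hπd.continuousAt.tendsto
    rw [hπ0] at h6
    exact h6.mono_left nhdsWithin_le_nhds
  -- the auxiliary function g
  set g : ℝ → ℝ := fun a => Real.Gamma (K + a) * Real.Gamma (X + c - a) * Real.Gamma c /
    (Real.Gamma (X + K + c) * Real.Gamma (a + 1) * Real.Gamma (c - a)) with hgdef
  have hGcont : ∀ s : ℝ, 0 < s → ContinuousAt Real.Gamma s := fun s hs =>
    (Real.differentiableAt_Gamma fun m =>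
      (((neg_nonpos.mpr (Nat.cast_nonneg m)).trans_lt hs).ne')).continuousAt
  have hgcont : ContinuousAt g 0 := by
    have c1 : ContinuousAt (fun a : ℝ => Real.Gamma (K + a)) 0 :=
      (hGcont (K + 0) (by linarith)).comp (by fun_prop)
    have c2 : ContinuousAt (fun a : ℝ => Real.Gamma (X + c - a)) 0 :=
      (hGcont (X + c - 0) (by linarith)).comp (by fun_prop)
    have c3 : ContinuousAt (fun a : ℝ => Real.Gamma (a + 1)) 0 :=
      ContinuousAt.comp (f := fun a : ℝ => a + 1) (x := (0 : ℝ))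
        (hGcont (0 + 1) (by norm_num)) (by fun_prop)
    have c4 : ContinuousAt (fun a : ℝ => Real.Gamma (c - a)) 0 :=
      (hGcont (c - 0) (by linarith)).comp (by fun_prop)
    exact ((c1.mul c2).mul continuousAt_const).div
      ((continuousAt_const.mul c3).mul c4)
      (by
        have := Real.Gamma_pos_of_pos (show (0:ℝ) < X + K + c by linarith)
        have := Real.Gamma_pos_of_pos (show (0:ℝ) < (0:ℝ) + 1 by norm_num)
        have := Real.Gamma_pos_of_pos (show (0:ℝ) < c - 0 by linarith)
        positivity)
  have hΓcne : Real.Gamma c ≠ 0 := (Real.Gamma_pos_of_pos hc).ne'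
  have hΓXKc : Real.Gamma (X + K + c) ≠ 0 := (Real.Gamma_pos_of_pos (by linarith)).ne'
  have hg0 : g 0 = L := by
    rw [hgdef, hLdef]
    simp only [add_zero, sub_zero, zero_add, Real.Gamma_one, mul_one]
    field_simp
  have htend : Tendsto (fun h => g (c * pih r t h)) (𝓝[>] (0 : ℝ)) (𝓝 L) := by
    have h7 : Tendsto (fun h => c * pih r t h) (𝓝[>] (0 : ℝ)) (𝓝 0) := by
      simpa using hπtend.const_mul c
    simpa [hg0, Function.comp_def] using hgcont.tendsto.comp h7
  -- the key identity for h > 0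
  have heq : ∀ h : ℝ, 0 < h →
      mbnbPmf m₂ x (c * pih r t h) (c * (1 - pih r t h)) k
        = c * P * (pih r t h * g (c * pih r t h)) := by
    intro h hh
    have hint : 0 < ∫ s in t..(t + h), r s :=
      intervalIntegral.intervalIntegral_pos_of_pos (hInt t (t + h)) hr_pos (by linarith)
    have hp0 : 0 < pih r t h := by
      rw [pih, sub_pos]
      exact Real.exp_lt_one_iff.mpr (by linarith)
    have hp1 : pih r t h < 1 := by
      rw [pih]
      have := Real.exp_pos (-(∫ s in t..(t + h), r s))
      linarith
    set p := pih r t h with hpdef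
    have hα : 0 < c * p := mul_pos hc hp0
    have hβ : 0 < c * (1 - p) := mul_pos hc (by linarith)
    have n1 : Real.Gamma (c * p) ≠ 0 := (Real.Gamma_pos_of_pos hα).ne'
    have n2 : Real.Gamma (c - c * p) ≠ 0 :=
      (Real.Gamma_pos_of_pos (by nlinarith)).ne'
    simp only [mbnbPmf, betaFn, hgdef, ← hKdef, ← hXdef, ← hPdef]
    rw [show K + c * p + (X + c * (1 - p)) = X + K + c from by ring,
      show c * p + c * (1 - p) = c from by ring,
      show X + c * (1 - p) = X + c - c * p from by ring,
      show c * (1 - p) = c - c * p from by ring,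
      Real.Gamma_add_one hα.ne']
    field_simp
  -- assemble the little-o estimate
  have E1 : (fun h : ℝ => (pih r t h - h * r t) * g (c * pih r t h))
      =o[𝓝[>] (0 : ℝ)] fun h => h := by
    simpa using hlin.mul_isBigO (htend.isBigO_one ℝ)
  have E2 : (fun h : ℝ => h * (r t * (g (c * pih r t h) - L)))
      =o[𝓝[>] (0 : ℝ)] fun h => h := by
    have h0 : Tendsto (fun h => r t * (g (c * pih r t h) - L)) (𝓝[>] (0 : ℝ)) (𝓝 0) := by
      have h8 := (htend.sub_const L).const_mul (r t)
      simpa using h8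
    have h9 := (isBigO_refl (fun h : ℝ => h) (𝓝[>] (0 : ℝ))).mul_isLittleO
      ((isLittleO_one_iff ℝ).mpr h0)
    simpa using h9
  have E := (E1.add E2).const_mul_left (c * P)
  have hev : (fun h : ℝ => mbnbPmf m₂ x (c * pih r t h) (c * (1 - pih r t h)) k
        - c * P * L * r t * h)
      =ᶠ[𝓝[>] (0 : ℝ)] (fun h : ℝ => c * P * ((pih r t h - h * r t) * g (c * pih r t h)
        + h * (r t * (g (c * pih r t h) - L)))) := by
    filter_upwards [self_mem_nhdsWithin] with h hh
    rw [heq h hh]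
    ring
  exact hev.trans_isLittleO E
end
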